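/- Let ρ be a density operator on the (n_O + n_B)-qubit space (ℂ²)^{⊗n_O} ⊗ (ℂ²)^{⊗n_B}, let σ_O and σ_B be density operators on (ℂ²)^{⊗n_O} and (ℂ²)^{⊗n_B} respectively, and let δ > 0. If |Tr((ρ − σ_O ⊗ σ_B)P)| ≤ δ for every (n_O + n_B)-qubit Pauli operator P, then ‖ρ − ρ_O ⊗ ρ_B‖₁ ≤ 3·2^{n_O + n_B}·δ, where ρ_O and ρ_B are the partial traces of ρ. -/

import Mathlib

open Matrix
open scoped Kronecker ComplexOrder

/-- The trace norm `‖A‖₁ = Tr √(AᴴA)` of a complex square matrix. -/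
noncomputable def traceNorm {n : Type*} [Fintype n] [DecidableEq n] (A : Matrix n n ℂ) : ℝ :=
  ((Matrix.posSemidef_conjTranspose_mul_self A).1.eigenvectorUnitary.1 *
    diagonal (Complex.ofReal ∘ (Real.sqrt ·) ∘ (Matrix.posSemidef_conjTranspose_mul_self A).1.eigenvalues) *
    (star (Matrix.posSemidef_conjTranspose_mul_self A).1.eigenvectorUnitary : Matrix n n ℂ)).trace.re

/-- A density operator: positive semidefinite with unit trace. -/
def IsDensity {n : Type*} [Fintype n] (ρ : Matrix n n ℂ) : Prop :=
  ρ.PosSemidef ∧ ρ.trace = 1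

/-- Partial trace over the second tensor factor. -/
noncomputable def ptraceSnd {a b : Type*} [Fintype b] (ρ : Matrix (a × b) (a × b) ℂ) :
    Matrix a a ℂ :=
  Matrix.of fun i i' => ∑ x, ρ (i, x) (i', x)

/-- Partial trace over the first tensor factor. -/
noncomputable def ptraceFst {a b : Type*} [Fintype a] (ρ : Matrix (a × b) (a × b) ℂ) :
    Matrix b b ℂ :=
  Matrix.of fun j j' => ∑ x, ρ (x, j) (x, j')

/-- The four single-qubit Pauli matrices `I, X, Y, Z`. -/
noncomputable def pauli1 : Fin 4 → Matrix (Fin 2) (Fin 2) ℂ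
  | 0 => 1
  | 1 => !![0, 1; 1, 0]
  | 2 => !![0, -Complex.I; Complex.I, 0]
  | 3 => !![1, 0; 0, -1]

/-- The `n`-qubit Pauli operator given by a word `f : Fin n → Fin 4`. -/
noncomputable def pauliN {n : ℕ} (f : Fin n → Fin 4) :
    Matrix (Fin n → Fin 2) (Fin n → Fin 2) ℂ :=
  Matrix.of fun x y => ∏ i, pauli1 (f i) (x i) (y i)

set_option linter.unreachableTactic false
set_option linter.unusedTactic false

lemma pauli1_sum4 (a b c d : Fin 2) :
    ∑ k : Fin 4, pauli1 k a b * pauli1 k c d = if a = d ∧ b = c then 2 else 0 := by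
  fin_cases a <;> fin_cases b <;> fin_cases c <;> fin_cases d <;>
    simp [Fin.sum_univ_four, pauli1, Matrix.one_apply] <;> ring_nf <;>
    simp [Complex.I_sq]

lemma pauli1_conj (k : Fin 4) (a b : Fin 2) :
    (starRingEnd ℂ) (pauli1 k a b) = pauli1 k b a := by
  fin_cases k <;> fin_cases a <;> fin_cases b <;>
    simp [pauli1, Matrix.one_apply]

lemma pauli1_sq (k : Fin 4) (a b : Fin 2) :
    ∑ c : Fin 2, pauli1 k a c * pauli1 k c b = if a = b then 1 else 0 := by
  fin_cases k <;> fin_cases a <;> fin_cases b <;>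
    simp [Fin.sum_univ_two, pauli1, Matrix.one_apply] <;> ring_nf <;>
    simp [Complex.I_sq]


lemma pauliN_sum {n : ℕ} (a b c d : Fin n → Fin 2) :
    ∑ f : Fin n → Fin 4, pauliN f a b * pauliN f c d
      = if a = d ∧ b = c then (2:ℂ)^n else 0 := by
  have e1 : ∀ f : Fin n → Fin 4, pauliN f a b * pauliN f c d
      = ∏ i, (pauli1 (f i) (a i) (b i) * pauli1 (f i) (c i) (d i)) := by
    intro f; simp [pauliN, Finset.prod_mul_distrib]
  simp only [e1]
  rw [← Fintype.prod_sum (fun (i : Fin n) (k : Fin 4) =>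
    pauli1 k (a i) (b i) * pauli1 k (c i) (d i))]
  simp only [pauli1_sum4]
  by_cases h : a = d ∧ b = c
  · simp [h.1, h.2, Finset.prod_const]
  · have : ∃ i, ¬(a i = d i ∧ b i = c i) := by
      by_contra hc
      push_neg at hc
      exact h ⟨funext fun i => (hc i).1, funext fun i => (hc i).2⟩
    obtain ⟨i, hi⟩ := this
    rw [if_neg h]
    exact Finset.prod_eq_zero (Finset.mem_univ i) (by simp [hi])

lemma pauliN_herm {n : ℕ} (f : Fin n → Fin 4) : (pauliN f)ᴴ = pauliN f := by
  ext x y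
  simp only [conjTranspose_apply, pauliN, Matrix.of_apply, RCLike.star_def, map_prod]
  exact Finset.prod_congr rfl fun i _ => pauli1_conj _ _ _

lemma pauliN_mul_self {n : ℕ} (f : Fin n → Fin 4) : pauliN f * pauliN f = 1 := by
  ext x y
  simp only [mul_apply, pauliN, Matrix.of_apply]
  have e1 : ∀ z : Fin n → Fin 2,
      (∏ i, pauli1 (f i) (x i) (z i)) * ∏ i, pauli1 (f i) (z i) (y i)
      = ∏ i, (pauli1 (f i) (x i) (z i) * pauli1 (f i) (z i) (y i)) := by
    intro z; simp [Finset.prod_mul_distrib]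
  simp only [e1]
  rw [← Fintype.prod_sum (fun (i : Fin n) (c : Fin 2) =>
    pauli1 (f i) (x i) c * pauli1 (f i) c (y i))]
  simp only [pauli1_sq]
  by_cases h : x = y
  · simp [h, Matrix.one_apply]
  · have : ∃ i, x i ≠ y i := Function.ne_iff.mp h
    obtain ⟨i, hi⟩ := this
    rw [Matrix.one_apply_ne h]
    exact Finset.prod_eq_zero (Finset.mem_univ i) (by simp [hi])

lemma pauliN_zero {n : ℕ} : pauliN (fun _ : Fin n => 0) = 1 := by
  ext x y
  simp only [pauliN, Matrix.of_apply]
  by_cases h : x = y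
  · simp [h, Matrix.one_apply, pauli1]
  · obtain ⟨i, hi⟩ := Function.ne_iff.mp h
    rw [Matrix.one_apply_ne h]
    exact Finset.prod_eq_zero (Finset.mem_univ i)
      (by simp [pauli1, Matrix.one_apply, hi])

lemma psd_diag_nonneg {m : Type*} [Fintype m] [DecidableEq m] {M : Matrix m m ℂ}
    (hM : M.PosSemidef) (i : m) : 0 ≤ M i i := by
  exact hM.diag_nonneg

lemma psd_trace_re_nonneg {m : Type*} [Fintype m] [DecidableEq m] {M : Matrix m m ℂ}
    (hM : M.PosSemidef) : 0 ≤ M.trace.re := by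
  rw [Matrix.trace, Complex.re_sum]
  exact Finset.sum_nonneg fun i _ => (Complex.le_def.mp (psd_diag_nonneg hM i)).1

open scoped MatrixOrder in
lemma trace_re_nonneg_of_density_psd {m : Type*} [Fintype m] [DecidableEq m]
    {σ N : Matrix m m ℂ} (hσ : IsDensity σ) (hN : N.PosSemidef) :
    0 ≤ (σ * N).trace.re := by
  have hS : (CFC.sqrt σ).PosSemidef := (CFC.sqrt_nonneg σ).posSemidef
  have hmul : σ * N = CFC.sqrt σ * (CFC.sqrt σ * N) := by
    rw [← mul_assoc, CFC.sqrt_mul_sqrt_self σ hσ.1.nonneg]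
  have : (σ * N).trace = (CFC.sqrt σ * N * CFC.sqrt σ).trace := by
    rw [hmul, trace_mul_comm, mul_assoc]
  rw [this]
  have : (CFC.sqrt σ * N * CFC.sqrt σ).PosSemidef := by
    have := hN.conjTranspose_mul_mul_same (CFC.sqrt σ)
    rwa [hS.1.eq] at this
  exact psd_trace_re_nonneg this

lemma trace_mul_le_one {m : Type*} [Fintype m] [DecidableEq m]
    (σ P : Matrix m m ℂ) (hσ : IsDensity σ) (hP : Pᴴ = P) (hP2 : P * P = 1) :
    ‖(σ * P).trace‖ ≤ 1 := by
  set t := (σ * P).trace with ht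
  have htreal : t.im = 0 := by
    have h1 : star t = t := by
      rw [ht, ← Matrix.trace_conjTranspose, Matrix.conjTranspose_mul, hP, hσ.1.1.eq,
        trace_mul_comm]
    have h2 := congrArg Complex.im h1
    simp only [Complex.star_def, Complex.conj_im] at h2
    linarith
  have key : ∀ s : ℂ, s = 1 ∨ s = -1 → 0 ≤ 1 + s.re * t.re := by
    intro s hs
    have hN : ((1 + s • P) * (1 + s • P)).PosSemidef := by
      have := Matrix.posSemidef_conjTranspose_mul_self (1 + s • P)
      have he : (1 + s • P)ᴴ = 1 + s • P := by
        rcases hs with hs | hs <;>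
          simp [hs, Matrix.conjTranspose_add, Matrix.conjTranspose_smul, hP]
      rwa [he] at this
    have hNtr := trace_re_nonneg_of_density_psd hσ hN
    have hexp : (σ * ((1 + s • P) * (1 + s • P))).trace = 2 + (2 * s) * t := by
      have hsq : (1 + s • P) * (1 + s • P) = (1 + 1 : Matrix m m ℂ) + (2 * s) • P := by
        rcases hs with hs | hs <;>
        · subst hs
          simp only [add_mul, mul_add, one_mul, mul_one, smul_mul_smul_comm, hP2]
          module
      rw [hsq]
      simp only [Matrix.mul_add, Matrix.mul_smul, trace_add, trace_smul, mul_one, ← ht]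
      rw [hσ.2]
      simp [smul_eq_mul]
      ring
    rw [hexp] at hNtr
    have : s.im = 0 := by rcases hs with hs | hs <;> simp [hs]
    simp only [Complex.add_re, Complex.mul_re, Complex.mul_im, this, htreal] at hNtr
    norm_num at hNtr
    nlinarith [hNtr]
  have hp := key 1 (Or.inl rfl)
  have hm := key (-1) (Or.inr rfl)
  simp only [Complex.one_re, Complex.neg_re, Complex.one_re] at hp hm
  rw [Complex.norm_def, Complex.normSq_apply, htreal]
  rw [show t.re * t.re + 0 * 0 = t.re ^ 2 by ring, Real.sqrt_sq_eq_abs]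
  rw [abs_le]
  constructor <;> nlinarith

lemma trace_conjTranspose_mul_self_re {m : Type*} [Fintype m] [DecidableEq m]
    (S : Matrix m m ℂ) :
    (Sᴴ * S).trace.re = ∑ i, ∑ j, Complex.normSq (S j i) := by
  rw [Matrix.trace]
  simp only [Matrix.diag, mul_apply, conjTranspose_apply, Complex.re_sum]
  congr 1; ext i; congr 1; ext j
  simp [Complex.normSq_apply, Complex.mul_re]

lemma traceNorm_sq_le {m : Type*} [Fintype m] [DecidableEq m] (A : Matrix m m ℂ) :
    traceNorm A ^ 2 ≤ (Fintype.card m : ℝ) * (Aᴴ * A).trace.re := by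
  set S := (Matrix.posSemidef_conjTranspose_mul_self A).1.eigenvectorUnitary.1 *
    diagonal (Complex.ofReal ∘ (Real.sqrt ·) ∘ (Matrix.posSemidef_conjTranspose_mul_self A).1.eigenvalues) *
    (star (Matrix.posSemidef_conjTranspose_mul_self A).1.eigenvectorUnitary : Matrix m m ℂ) with hSdef
  have hSS : Sᴴ * S = Aᴴ * A := by
    have hUU := Unitary.star_mul_self_of_mem
      (Matrix.posSemidef_conjTranspose_mul_self A).1.eigenvectorUnitary.2
    have hDD : diagonal (Complex.ofReal ∘ (Real.sqrt ·) ∘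
          (Matrix.posSemidef_conjTranspose_mul_self A).1.eigenvalues) *
        diagonal (Complex.ofReal ∘ (Real.sqrt ·) ∘
          (Matrix.posSemidef_conjTranspose_mul_self A).1.eigenvalues)
        = diagonal ((RCLike.ofReal : ℝ → ℂ) ∘
          (Matrix.posSemidef_conjTranspose_mul_self A).1.eigenvalues) := by
      rw [diagonal_mul_diagonal]; congr 1; funext i
      simp only [Function.comp_apply, ← Complex.ofReal_mul]
      exact congrArg Complex.ofReal
        (Real.mul_self_sqrt ((Matrix.posSemidef_conjTranspose_mul_self A).eigenvalues_nonneg i))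
    have hsp := (Matrix.posSemidef_conjTranspose_mul_self A).1.spectral_theorem
    rw [Unitary.conjStarAlgAut_apply] at hsp
    refine Eq.trans ?_ hsp.symm
    rw [← hDD, hSdef]
    simp only [conjTranspose_mul, diagonal_conjTranspose, Unitary.coe_star,
      Matrix.star_eq_conjTranspose, conjTranspose_conjTranspose, mul_assoc]
    rw [Matrix.star_eq_conjTranspose] at hUU
    rw [← mul_assoc ((↑(Matrix.posSemidef_conjTranspose_mul_self A).1.eigenvectorUnitary :
      Matrix m m ℂ)ᴴ), hUU, one_mul]
    congr 3
    funext i; simp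
  have h1 : traceNorm A = ∑ i, (S i i).re := by
    rw [traceNorm, Matrix.trace, Complex.re_sum]; rfl
  rw [h1]
  calc (∑ i, (S i i).re) ^ 2
      ≤ (Fintype.card m : ℝ) * ∑ i, (S i i).re ^ 2 := by
        simpa using sq_sum_le_card_mul_sum_sq (s := Finset.univ)
          (f := fun i => (S i i).re)
    _ ≤ (Fintype.card m : ℝ) * (Aᴴ * A).trace.re := by
        apply mul_le_mul_of_nonneg_left _ (by positivity)
        rw [← hSS, trace_conjTranspose_mul_self_re]
        apply Finset.sum_le_sum
        intro i _
        calc (S i i).re ^ 2 ≤ Complex.normSq (S i i) := by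
              rw [Complex.normSq_apply]; nlinarith [sq_nonneg ((S i i).im)]
          _ ≤ ∑ j, Complex.normSq (S j i) :=
              Finset.single_le_sum (f := fun j => Complex.normSq (S j i))
                (fun j _ => Complex.normSq_nonneg _) (Finset.mem_univ i)

lemma kron_conjTranspose {m n : Type*} [Fintype m] [Fintype n]
    (A : Matrix m m ℂ) (B : Matrix n n ℂ) : (A ⊗ₖ B)ᴴ = Aᴴ ⊗ₖ Bᴴ := by
  ext ⟨i, j⟩ ⟨k, l⟩
  simp [conjTranspose_apply, Matrix.kroneckerMap_apply, star_mul', mul_comm]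

lemma trace_mul_sum' {m : Type*} [Fintype m] (A B : Matrix m m ℂ) :
    (A * B).trace = ∑ p : m × m, A p.1 p.2 * B p.2 p.1 := by
  rw [Matrix.trace]
  simp only [Matrix.diag, mul_apply]
  rw [Fintype.sum_prod_type]

lemma Qsum {nO nB : ℕ} (a b c d : (Fin nO → Fin 2) × (Fin nB → Fin 2)) :
    ∑ f : (Fin nO → Fin 4) × (Fin nB → Fin 4),
      (pauliN f.1 ⊗ₖ pauliN f.2) a b * (pauliN f.1 ⊗ₖ pauliN f.2) c d
    = if a = d ∧ b = c then (2:ℂ)^(nO+nB) else 0 := by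
  obtain ⟨a1, a2⟩ := a; obtain ⟨b1, b2⟩ := b; obtain ⟨c1, c2⟩ := c; obtain ⟨d1, d2⟩ := d
  rw [Fintype.sum_prod_type]
  simp only [Matrix.kroneckerMap_apply]
  have e1 : ∀ (fO : Fin nO → Fin 4) (fB : Fin nB → Fin 4),
      pauliN fO a1 b1 * pauliN fB a2 b2 * (pauliN fO c1 d1 * pauliN fB c2 d2)
      = (pauliN fO a1 b1 * pauliN fO c1 d1) * (pauliN fB a2 b2 * pauliN fB c2 d2) := by
    intro fO fB; ring
  simp only [e1]
  rw [← Finset.sum_mul_sum]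
  rw [pauliN_sum, pauliN_sum]
  simp only [Prod.mk.injEq]
  by_cases h1 : a1 = d1 ∧ b1 = c1
  · by_cases h2 : a2 = d2 ∧ b2 = c2
    · rw [if_pos h1, if_pos h2, if_pos ⟨⟨h1.1, h2.1⟩, ⟨h1.2, h2.2⟩⟩, pow_add]
    · rw [if_neg h2, mul_zero, if_neg (by tauto)]
  · rw [if_neg h1, zero_mul, if_neg (by tauto)]

set_option maxHeartbeats 1000000 in
lemma parseval {nO nB : ℕ}
    (A B : Matrix ((Fin nO → Fin 2) × (Fin nB → Fin 2))
                  ((Fin nO → Fin 2) × (Fin nB → Fin 2)) ℂ) :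
    ∑ f : (Fin nO → Fin 4) × (Fin nB → Fin 4),
      (A * (pauliN f.1 ⊗ₖ pauliN f.2)).trace * (B * (pauliN f.1 ⊗ₖ pauliN f.2)).trace
    = (2:ℂ)^(nO+nB) * (A * B).trace := by
  simp only [trace_mul_sum']
  simp only [Finset.sum_mul_sum]
  rw [Finset.sum_comm]
  have e1 : ∀ p q : ((Fin nO → Fin 2) × (Fin nB → Fin 2)) × ((Fin nO → Fin 2) × (Fin nB → Fin 2)),
      ∑ f : (Fin nO → Fin 4) × (Fin nB → Fin 4),
        A p.1 p.2 * (pauliN f.1 ⊗ₖ pauliN f.2) p.2 p.1 *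
          (B q.1 q.2 * (pauliN f.1 ⊗ₖ pauliN f.2) q.2 q.1)
      = A p.1 p.2 * B q.1 q.2 *
          (if p.2 = q.1 ∧ p.1 = q.2 then (2:ℂ)^(nO+nB) else 0) := by
    intro p q
    rw [← Qsum p.2 p.1 q.2 q.1, Finset.mul_sum]
    congr 1; ext f; ring
  calc ∑ p : ((Fin nO → Fin 2) × (Fin nB → Fin 2)) × ((Fin nO → Fin 2) × (Fin nB → Fin 2)),
        ∑ f : (Fin nO → Fin 4) × (Fin nB → Fin 4),
        ∑ q : ((Fin nO → Fin 2) × (Fin nB → Fin 2)) × ((Fin nO → Fin 2) × (Fin nB → Fin 2)),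
        A p.1 p.2 * (pauliN f.1 ⊗ₖ pauliN f.2) p.2 p.1 *
          (B q.1 q.2 * (pauliN f.1 ⊗ₖ pauliN f.2) q.2 q.1)
      = ∑ p : ((Fin nO → Fin 2) × (Fin nB → Fin 2)) × ((Fin nO → Fin 2) × (Fin nB → Fin 2)),
        ∑ q : ((Fin nO → Fin 2) × (Fin nB → Fin 2)) × ((Fin nO → Fin 2) × (Fin nB → Fin 2)),
          A p.1 p.2 * B q.1 q.2 *
          (if p.2 = q.1 ∧ p.1 = q.2 then (2:ℂ)^(nO+nB) else 0) := by
        refine Finset.sum_congr rfl fun p _ => ?_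
        rw [Finset.sum_comm]
        exact Finset.sum_congr rfl fun q _ => e1 p q
    _ = ∑ p : ((Fin nO → Fin 2) × (Fin nB → Fin 2)) × ((Fin nO → Fin 2) × (Fin nB → Fin 2)),
          A p.1 p.2 * B p.2 p.1 * (2:ℂ)^(nO+nB) := by
        refine Finset.sum_congr rfl fun p _ => ?_
        rw [Finset.sum_eq_single (p.2, p.1)]
        · simp
        · intro q _ hq
          rw [if_neg, mul_zero]
          intro ⟨h1, h2⟩
          exact hq (Prod.ext h1.symm h2.symm)
        · intro hmem; exact absurd (Finset.mem_univ _) hmem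
    _ = (2:ℂ)^(nO+nB) * ∑ p : ((Fin nO → Fin 2) × (Fin nB → Fin 2)) × ((Fin nO → Fin 2) × (Fin nB → Fin 2)),
          A p.1 p.2 * B p.2 p.1 := by
        rw [Finset.mul_sum]
        exact Finset.sum_congr rfl fun p _ => by ring

lemma trace_ptraceSnd_mul {a b : Type*} [Fintype a] [Fintype b] [DecidableEq a] [DecidableEq b]
    (ρ : Matrix (a × b) (a × b) ℂ) (M : Matrix a a ℂ) :
    (ptraceSnd ρ * M).trace = (ρ * (M ⊗ₖ (1 : Matrix b b ℂ))).trace := by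
  simp only [Matrix.trace, Matrix.diag, mul_apply, ptraceSnd, Matrix.of_apply,
    Fintype.sum_prod_type, Matrix.kroneckerMap_apply, Matrix.one_apply, mul_ite, mul_one,
    mul_zero, Finset.sum_ite_eq', Finset.mem_univ, if_true, Finset.sum_mul]
  refine Finset.sum_congr rfl fun i _ => ?_
  rw [Finset.sum_comm]

lemma trace_ptraceFst_mul {a b : Type*} [Fintype a] [Fintype b] [DecidableEq a] [DecidableEq b]
    (ρ : Matrix (a × b) (a × b) ℂ) (M : Matrix b b ℂ) :
    (ptraceFst ρ * M).trace = (ρ * ((1 : Matrix a a ℂ) ⊗ₖ M)).trace := by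
  simp only [Matrix.trace, Matrix.diag, mul_apply, ptraceFst, Matrix.of_apply,
    Fintype.sum_prod_type, Matrix.kroneckerMap_apply, Matrix.one_apply, ite_mul, one_mul,
    zero_mul, Finset.sum_ite_eq', Finset.mem_univ, if_true, Finset.sum_mul]
  rw [show ∀ (F : a → b → a → b → ℂ), (∑ x : a, ∑ x_1 : b, ∑ x_2 : a, ∑ x_3 : b, F x x_1 x_2 x_3)
      = ∑ x : a, ∑ x_1 : b, ∑ x_3 : b, ∑ x_2 : a, F x x_1 x_2 x_3 from
    fun F => Finset.sum_congr rfl fun x _ => Finset.sum_congr rfl fun x_1 _ => Finset.sum_comm]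
  simp only [mul_ite, mul_zero, Finset.sum_ite_eq', Finset.mem_univ, if_true]
  rw [show ∀ (G : b → b → a → ℂ), (∑ x : b, ∑ x_1 : b, ∑ i : a, G x x_1 i)
      = ∑ x : b, ∑ i : a, ∑ x_1 : b, G x x_1 i from
    fun G => Finset.sum_congr rfl fun x _ => Finset.sum_comm]
  rw [Finset.sum_comm]

/-- **Decoupling bound.** If no `(n_O + n_B)`-qubit Pauli observable can distinguish the
state `ρ` of `OB` from a product state `σ_O ⊗ σ_B` with bias better than `δ`, then the
two marginals of `ρ` are nearly uncorrelated:
`‖ρ − ρ_O ⊗ ρ_B‖₁ ≤ 3·2^{n_O+n_B}·δ`. -/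
theorem decoupling_bound
    (nO nB : ℕ)
    (ρ : Matrix ((Fin nO → Fin 2) × (Fin nB → Fin 2))
                ((Fin nO → Fin 2) × (Fin nB → Fin 2)) ℂ)
    (σO : Matrix (Fin nO → Fin 2) (Fin nO → Fin 2) ℂ)
    (σB : Matrix (Fin nB → Fin 2) (Fin nB → Fin 2) ℂ)
    (hρ : IsDensity ρ) (hσO : IsDensity σO) (hσB : IsDensity σB)
    (δ : ℝ) (hδ : 0 < δ)
    (h : ∀ (fO : Fin nO → Fin 4) (fB : Fin nB → Fin 4),
      ‖((ρ - σO ⊗ₖ σB) * (pauliN fO ⊗ₖ pauliN fB)).trace‖ ≤ δ) :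
    traceNorm (ρ - (ptraceSnd ρ) ⊗ₖ (ptraceFst ρ)) ≤ 3 * 2 ^ (nO + nB) * δ := by
  classical
  set A := ρ - (ptraceSnd ρ) ⊗ₖ (ptraceFst ρ) with hA
  have hQh : ∀ (fO : Fin nO → Fin 4) (fB : Fin nB → Fin 4),
      (pauliN fO ⊗ₖ pauliN fB)ᴴ = pauliN fO ⊗ₖ pauliN fB := by
    intro fO fB; rw [kron_conjTranspose, pauliN_herm, pauliN_herm]
  have hQ2 : ∀ (fO : Fin nO → Fin 4) (fB : Fin nB → Fin 4),
      (pauliN fO ⊗ₖ pauliN fB) * (pauliN fO ⊗ₖ pauliN fB) = 1 := by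
    intro fO fB
    rw [← Matrix.mul_kronecker_mul, pauliN_mul_self, pauliN_mul_self,
      Matrix.one_kronecker_one]
  -- the trace of the product state against a Pauli splits
  have hsplit : ∀ (X : Matrix (Fin nO → Fin 2) (Fin nO → Fin 2) ℂ)
      (Y : Matrix (Fin nB → Fin 2) (Fin nB → Fin 2) ℂ)
      (fO : Fin nO → Fin 4) (fB : Fin nB → Fin 4),
      ((X ⊗ₖ Y) * (pauliN fO ⊗ₖ pauliN fB)).trace
        = (X * pauliN fO).trace * (Y * pauliN fB).trace := by
    intro X Y fO fB
    rw [← Matrix.mul_kronecker_mul, Matrix.trace_kronecker]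
  -- key coefficient bound
  have key : ∀ (fO : Fin nO → Fin 4) (fB : Fin nB → Fin 4),
      ‖(A * (pauliN fO ⊗ₖ pauliN fB)).trace‖ ≤ 3 * δ := by
    intro fO fB
    have hrO : (ptraceSnd ρ * pauliN fO).trace
        = (ρ * (pauliN fO ⊗ₖ pauliN (fun _ : Fin nB => (0 : Fin 4)))).trace := by
      rw [trace_ptraceSnd_mul, pauliN_zero]
    have hrB : (ptraceFst ρ * pauliN fB).trace
        = (ρ * (pauliN (fun _ : Fin nO => (0 : Fin 4)) ⊗ₖ pauliN fB)).trace := by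
      rw [trace_ptraceFst_mul, pauliN_zero]
    set rO := (ptraceSnd ρ * pauliN fO).trace with hrOdef
    set rB := (ptraceFst ρ * pauliN fB).trace with hrBdef
    set sO := (σO * pauliN fO).trace with hsOdef
    set sB := (σB * pauliN fB).trace with hsBdef
    set T := (ρ * (pauliN fO ⊗ₖ pauliN fB)).trace with hT
    have hdiff : ∀ (fO' : Fin nO → Fin 4) (fB' : Fin nB → Fin 4),
        ((ρ - σO ⊗ₖ σB) * (pauliN fO' ⊗ₖ pauliN fB')).trace
        = (ρ * (pauliN fO' ⊗ₖ pauliN fB')).trace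
          - (σO * pauliN fO').trace * (σB * pauliN fB').trace := by
      intro fO' fB'
      rw [Matrix.sub_mul, trace_sub, hsplit]
    have h1 : ‖T - sO * sB‖ ≤ δ := by
      have := h fO fB; rwa [hdiff] at this
    have h2 : ‖rO - sO‖ ≤ δ := by
      have := h fO (fun _ => 0)
      rw [hdiff, ← hrO] at this
      rw [pauliN_zero, mul_one, hσB.2, mul_one] at this
      exact this
    have h3 : ‖rB - sB‖ ≤ δ := by
      have := h (fun _ => 0) fB
      rw [hdiff, ← hrB] at this
      rw [pauliN_zero (n := nO), mul_one, hσO.2, one_mul] at this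
      exact this
    have habs_sO : ‖sO‖ ≤ 1 :=
      trace_mul_le_one σO (pauliN fO) hσO (pauliN_herm fO) (pauliN_mul_self fO)
    have habs_rB : ‖rB‖ ≤ 1 := by
      rw [hrB]
      exact trace_mul_le_one ρ _ hρ (hQh _ _) (hQ2 _ _)
    have hAQ : (A * (pauliN fO ⊗ₖ pauliN fB)).trace = T - rO * rB := by
      rw [hA, Matrix.sub_mul, trace_sub, hsplit, ← hT, ← hrOdef, ← hrBdef]
    rw [hAQ]
    have hid : T - rO * rB
        = (T - sO * sB) + sO * (sB - rB) + rB * (sO - rO) := by ring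
    rw [hid]
    calc ‖(T - sO * sB) + sO * (sB - rB) + rB * (sO - rO)‖
        ≤ ‖(T - sO * sB) + sO * (sB - rB)‖ + ‖rB * (sO - rO)‖ :=
          norm_add_le _ _
      _ ≤ ‖T - sO * sB‖ + ‖sO * (sB - rB)‖
            + ‖rB * (sO - rO)‖ := by
          gcongr; exact norm_add_le _ _
      _ ≤ δ + 1 * δ + 1 * δ := by
          gcongr
          · rw [norm_mul]
            apply mul_le_mul habs_sO _ (norm_nonneg _) zero_le_one
            rw [show sB - rB = -(rB - sB) by ring, norm_neg]
            exact h3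
          · rw [norm_mul]
            apply mul_le_mul habs_rB _ (norm_nonneg _) zero_le_one
            rw [show sO - rO = -(rO - sO) by ring, norm_neg]
            exact h2
      _ = 3 * δ := by ring
  -- Parseval bound on the Frobenius norm
  have hpar := parseval Aᴴ A
  have hconj : ∀ f : (Fin nO → Fin 4) × (Fin nB → Fin 4),
      (Aᴴ * (pauliN f.1 ⊗ₖ pauliN f.2)).trace
      = star ((A * (pauliN f.1 ⊗ₖ pauliN f.2)).trace) := by
    intro f
    rw [← Matrix.trace_conjTranspose, Matrix.conjTranspose_mul, hQh, trace_mul_comm]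
  have hsum : ∑ f : (Fin nO → Fin 4) × (Fin nB → Fin 4),
      (Complex.normSq ((A * (pauliN f.1 ⊗ₖ pauliN f.2)).trace) : ℂ)
      = (2:ℂ)^(nO+nB) * (Aᴴ * A).trace := by
    rw [← hpar]
    refine Finset.sum_congr rfl fun f _ => ?_
    rw [hconj f, Complex.star_def, Complex.normSq_eq_conj_mul_self]
  have hsum_re : ∑ f : (Fin nO → Fin 4) × (Fin nB → Fin 4),
      Complex.normSq ((A * (pauliN f.1 ⊗ₖ pauliN f.2)).trace)
      = (2:ℝ)^(nO+nB) * (Aᴴ * A).trace.re := by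
    have := congrArg Complex.re hsum
    rw [Complex.re_sum] at this
    simp only [Complex.ofReal_re] at this
    rw [this]
    have h2 : (2:ℂ)^(nO+nB) = (((2:ℝ)^(nO+nB) : ℝ) : ℂ) := by push_cast; ring
    rw [h2, Complex.re_ofReal_mul]
  have hfro : (2:ℝ)^(nO+nB) * (Aᴴ * A).trace.re ≤ (4:ℝ)^(nO+nB) * (9 * δ^2) := by
    rw [← hsum_re]
    have hcard : (Finset.univ : Finset ((Fin nO → Fin 4) × (Fin nB → Fin 4))).card
        = 4^(nO+nB) := by
      simp [Finset.card_univ, pow_add]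
    calc ∑ f : (Fin nO → Fin 4) × (Fin nB → Fin 4),
          Complex.normSq ((A * (pauliN f.1 ⊗ₖ pauliN f.2)).trace)
        ≤ ∑ _f : (Fin nO → Fin 4) × (Fin nB → Fin 4), 9 * δ^2 := by
          refine Finset.sum_le_sum fun f _ => ?_
          have hk := key f.1 f.2
          have : Complex.normSq ((A * (pauliN f.1 ⊗ₖ pauliN f.2)).trace)
              = ‖(A * (pauliN f.1 ⊗ₖ pauliN f.2)).trace‖ ^ 2 := by
            rw [Complex.sq_norm]
          rw [this]
          nlinarith [norm_nonneg ((A * (pauliN f.1 ⊗ₖ pauliN f.2)).trace)]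
      _ = (4:ℝ)^(nO+nB) * (9 * δ^2) := by
          rw [Finset.sum_const, hcard, nsmul_eq_mul]
          push_cast
          ring
  -- conclude via the trace-norm/Frobenius bound
  have htn := traceNorm_sq_le A
  have hcard2 : (Fintype.card ((Fin nO → Fin 2) × (Fin nB → Fin 2)) : ℝ)
      = (2:ℝ)^(nO+nB) := by
    simp [pow_add]
  rw [hcard2] at htn
  have hAA : (Aᴴ * A).trace.re ≤ (2:ℝ)^(nO+nB) * (9 * δ^2) := by
    have h4 : (4:ℝ)^(nO+nB) = (2:ℝ)^(nO+nB) * (2:ℝ)^(nO+nB) := by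
      rw [← mul_pow]; norm_num
    have hpos : (0:ℝ) < (2:ℝ)^(nO+nB) := by positivity
    nlinarith [hfro]
  have hsq : traceNorm A ^ 2 ≤ (3 * 2^(nO+nB) * δ)^2 := by
    calc traceNorm A ^ 2 ≤ (2:ℝ)^(nO+nB) * (Aᴴ * A).trace.re := htn
      _ ≤ (2:ℝ)^(nO+nB) * ((2:ℝ)^(nO+nB) * (9 * δ^2)) := by
          apply mul_le_mul_of_nonneg_left hAA (by positivity)
      _ = (3 * 2^(nO+nB) * δ)^2 := by ring
  have hrhs : (0:ℝ) ≤ 3 * 2^(nO+nB) * δ := by positivity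
  calc traceNorm A ≤ |traceNorm A| := le_abs_self _
    _ = Real.sqrt (traceNorm A ^ 2) := (Real.sqrt_sq_eq_abs _).symm
    _ ≤ Real.sqrt ((3 * 2^(nO+nB) * δ)^2) := Real.sqrt_le_sqrt hsq
    _ = 3 * 2^(nO+nB) * δ := by rw [Real.sqrt_sq hrhs]
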